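/- Let A be a nonnegative n×n matrix and let A_i denote the i-th principal (n-1)×(n-1) minor of A (delete row i and column i). If λ_p(A) is any real eigenvalue of A different from the maximal eigenvalue λ₁(A), then λ_p(A) ≤ λ₁(A_i) ≤ λ₁(A) for every i, with strict inequality λ₁(A_i) < λ₁(A) if A is irreducible. -/

import Mathlib

open Matrix Polynomial Finset

namespace HPaux

variable {m : ℕ}

lemma charmatrix_map_eval (M : Matrix (Fin m) (Fin m) ℝ) (t : ℝ) :
    (charmatrix M).map (evalRingHom t) = t • (1 : Matrix (Fin m) (Fin m) ℝ) - M := by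
  ext p q
  by_cases h : p = q <;>
    simp [charmatrix_apply, Matrix.sub_apply, Matrix.smul_apply, Matrix.one_apply, h,
      Matrix.diagonal, Matrix.map_apply]

lemma eval_charpoly (M : Matrix (Fin m) (Fin m) ℝ) (t : ℝ) :
    (M.charpoly).eval t = (t • (1 : Matrix (Fin m) (Fin m) ℝ) - M).det := by
  have h := RingHom.map_det (evalRingHom t) (charmatrix M)
  rw [RingHom.mapMatrix_apply, charmatrix_map_eval] at h
  simpa [Matrix.charpoly] using h

lemma det_pos_of_no_root (B : Matrix (Fin m) (Fin m) ℝ) {t : ℝ}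
    (h : ∀ u, t ≤ u → (u • (1 : Matrix (Fin m) (Fin m) ℝ) - B).det ≠ 0) :
    ∀ u, t ≤ u → 0 < (u • (1 : Matrix (Fin m) (Fin m) ℝ) - B).det := by
  intro u hu
  rcases Nat.eq_zero_or_pos m with hm | hm
  · subst hm
    simp [Matrix.det_isEmpty]
  by_contra hle
  push_neg at hle
  have hne := h u hu
  have hlt : (u • (1 : Matrix (Fin m) (Fin m) ℝ) - B).det < 0 := lt_of_le_of_ne hle hne
  set P := B.charpoly with hP
  have hdeg : 0 < P.degree := by
    rw [hP, Polynomial.degree_eq_natDegree B.charpoly_monic.ne_zero]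
    rw [Matrix.charpoly_natDegree_eq_dim]
    exact_mod_cast by simpa [Fintype.card_fin] using hm
  have htend : Filter.Tendsto (fun x => P.eval x) Filter.atTop Filter.atTop :=
    P.tendsto_atTop_of_leadingCoeff_nonneg hdeg (by simp [hP, B.charpoly_monic.leadingCoeff])
  obtain ⟨z, hz1, hzu⟩ :=
    ((htend.eventually_ge_atTop 1).and (Filter.eventually_ge_atTop u)).exists
  have hcont : ContinuousOn (fun x => P.eval x) (Set.Icc u z) :=
    (Polynomial.continuous P).continuousOn
  have h0mem : (0 : ℝ) ∈ Set.Icc (P.eval u) (P.eval z) := by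
    constructor
    · rw [hP, eval_charpoly]; exact le_of_lt hlt
    · linarith
  obtain ⟨x, hx, hx0⟩ := intermediate_value_Icc hzu hcont h0mem
  have : (x • (1 : Matrix (Fin m) (Fin m) ℝ) - B).det = 0 := by
    rw [← eval_charpoly]; exact hx0
  exact h x (le_trans hu hx.1) this

lemma eig_iff_det (M : Matrix (Fin m) (Fin m) ℝ) (mu : ℝ) :
    (∃ v : Fin m → ℝ, v ≠ 0 ∧ M.mulVec v = mu • v) ↔
      (mu • (1 : Matrix (Fin m) (Fin m) ℝ) - M).det = 0 := by
  rw [← Matrix.exists_mulVec_eq_zero_iff]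
  apply exists_congr
  intro v
  apply and_congr_right
  intro _
  rw [Matrix.sub_mulVec, Matrix.smul_mulVec, Matrix.one_mulVec, sub_eq_zero, eq_comm]

noncomputable def splitEq (i : Fin (m + 1)) : (Fin m) ⊕ Unit ≃ Fin (m + 1) :=
  Equiv.ofBijective (Sum.elim i.succAbove fun _ => i) (by
    constructor
    · rintro (a | a) (b | b) hab
      · simpa using (Fin.succAbove_right_inj (p := i)).mp (by simpa using hab)
      · exact absurd (show i.succAbove a = i by simpa using hab) (Fin.succAbove_ne i a)
      · exact absurd (show i.succAbove b = i by simpa using hab.symm) (Fin.succAbove_ne i b)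
      · rfl
    · intro p
      by_cases hp : p = i
      · exact ⟨Sum.inr (), by simp [hp]⟩
      · obtain ⟨z, hz⟩ := Fin.exists_succAbove_eq hp
        exact ⟨Sum.inl z, by simpa using hz⟩)

@[simp] lemma splitEq_inl (i : Fin (m + 1)) (j : Fin m) :
    splitEq i (Sum.inl j) = i.succAbove j := rfl

@[simp] lemma splitEq_inr (i : Fin (m + 1)) (u : Unit) : splitEq i (Sum.inr u) = i := rfl

lemma split_eq (B : Matrix (Fin (m + 1)) (Fin (m + 1)) ℝ) (i : Fin (m + 1)) (u : ℝ) :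
    (u • (1 : Matrix (Fin (m + 1)) (Fin (m + 1)) ℝ) - B).submatrix (splitEq i) (splitEq i) =
      fromBlocks (u • (1 : Matrix (Fin m) (Fin m) ℝ) - B.submatrix i.succAbove i.succAbove)
        (Matrix.of fun p (_ : Unit) => -(B (i.succAbove p) i))
        (Matrix.of fun (_ : Unit) q => -(B i (i.succAbove q)))
        (Matrix.of fun (_ : Unit) (_ : Unit) => u - B i i) := by
  ext (p | p) (q | q)
  · have : (1 : Matrix (Fin (m + 1)) (Fin (m + 1)) ℝ) (i.succAbove p) (i.succAbove q)
        = (1 : Matrix (Fin m) (Fin m) ℝ) p q := by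
      simp [Matrix.one_apply, Fin.succAbove_right_inj]
    simp [Matrix.submatrix_apply, Matrix.sub_apply, Matrix.smul_apply, fromBlocks_apply₁₁, this]
  · simp [Matrix.submatrix_apply, Matrix.sub_apply, Matrix.smul_apply,
      Matrix.one_apply_ne (Fin.succAbove_ne i p)]
  · simp [Matrix.submatrix_apply, Matrix.sub_apply, Matrix.smul_apply,
      Matrix.one_apply_ne (Ne.symm (Fin.succAbove_ne i q))]
  · simp [Matrix.submatrix_apply, Matrix.sub_apply, Matrix.smul_apply, Matrix.one_apply]

lemma mul_nonneg_entries {l n o : Type*} [Fintype n] (X : Matrix l n ℝ) (Y : Matrix n o ℝ)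
    (hX : ∀ a b, 0 ≤ X a b) (hY : ∀ a b, 0 ≤ Y a b) : ∀ a b, 0 ≤ (X * Y) a b := by
  intro a b
  rw [Matrix.mul_apply]
  exact Finset.sum_nonneg fun c _ => mul_nonneg (hX a c) (hY c b)


abbrev minorM (B : Matrix (Fin (m + 1)) (Fin (m + 1)) ℝ) (i : Fin (m + 1)) :
    Matrix (Fin m) (Fin m) ℝ := B.submatrix i.succAbove i.succAbove

noncomputable def gval (B : Matrix (Fin (m + 1)) (Fin (m + 1)) ℝ) (i : Fin (m + 1)) (u : ℝ) : ℝ :=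
  ∑ p, ∑ q, B i (i.succAbove p) *
    (u • (1 : Matrix (Fin m) (Fin m) ℝ) - minorM B i)⁻¹ p q * B (i.succAbove q) i

lemma gval_nonneg (B : Matrix (Fin (m + 1)) (Fin (m + 1)) ℝ) (i : Fin (m + 1)) (u : ℝ)
    (hB : ∀ p q, 0 ≤ B p q)
    (hinv : ∀ p q, 0 ≤ (u • (1 : Matrix (Fin m) (Fin m) ℝ) - minorM B i)⁻¹ p q) :
    0 ≤ gval B i u := by
  apply Finset.sum_nonneg; intro p _
  apply Finset.sum_nonneg; intro q _
  exact mul_nonneg (mul_nonneg (hB _ _) (hinv p q)) (hB _ _)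

lemma schur_det (B : Matrix (Fin (m + 1)) (Fin (m + 1)) ℝ) (i : Fin (m + 1)) (u : ℝ)
    (h : IsUnit (u • (1 : Matrix (Fin m) (Fin m) ℝ) - minorM B i).det) :
    (u • (1 : Matrix (Fin (m + 1)) (Fin (m + 1)) ℝ) - B).det
      = (u • (1 : Matrix (Fin m) (Fin m) ℝ) - minorM B i).det * (u - B i i - gval B i u) := by
  haveI := (u • (1 : Matrix (Fin m) (Fin m) ℝ) - minorM B i).invertibleOfIsUnitDet h
  rw [← Matrix.det_submatrix_equiv_self (splitEq i), split_eq, Matrix.det_fromBlocks₁₁]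
  congr 1
  rw [Matrix.det_unique, Matrix.sub_apply, Matrix.invOf_eq_nonsing_inv]
  have hval : (Matrix.of (fun (_ : Unit) q => -(B i (i.succAbove q))) *
      (u • (1 : Matrix (Fin m) (Fin m) ℝ) - minorM B i)⁻¹ *
      Matrix.of (fun p (_ : Unit) => -(B (i.succAbove p) i))) PUnit.unit PUnit.unit
      = gval B i u := by
    simp only [Matrix.mul_apply, Matrix.of_apply, Finset.sum_mul, Finset.mul_sum, gval]
    rw [Finset.sum_comm]
    apply Finset.sum_congr rfl; intro p _
    apply Finset.sum_congr rfl; intro q _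
    ring
  rw [hval]
  rfl

def InvStat (m : ℕ) : Prop :=
  ∀ B : Matrix (Fin m) (Fin m) ℝ, (∀ p q, 0 ≤ B p q) → ∀ t : ℝ,
    (∀ u, t ≤ u → (u • (1 : Matrix (Fin m) (Fin m) ℝ) - B).det ≠ 0) →
    ∀ u, t ≤ u → ∀ p q, 0 ≤ (u • (1 : Matrix (Fin m) (Fin m) ℝ) - B)⁻¹ p q

lemma minor_step {m : ℕ} (ih : InvStat m) (B : Matrix (Fin (m + 1)) (Fin (m + 1)) ℝ)
    (hB : ∀ p q, 0 ≤ B p q) (t : ℝ)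
    (hroot : ∀ u, t ≤ u → (u • (1 : Matrix (Fin (m + 1)) (Fin (m + 1)) ℝ) - B).det ≠ 0)
    (i : Fin (m + 1)) :
    ∀ u, t ≤ u → 0 < (u • (1 : Matrix (Fin m) (Fin m) ℝ) - minorM B i).det := by
  intro u hu
  set C := minorM B i with hC
  by_cases hgood : ∀ z, t ≤ z → (z • (1 : Matrix (Fin m) (Fin m) ℝ) - C).det ≠ 0
  · exact det_pos_of_no_root C hgood u hu
  push_neg at hgood
  obtain ⟨z₀, hz₀t, hz₀⟩ := hgood
  exfalso
  set F : Finset ℝ := C.charpoly.roots.toFinset.filter (fun s => t ≤ s) with hF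
  have hmemF : ∀ s : ℝ, s ∈ F ↔
      ((s • (1 : Matrix (Fin m) (Fin m) ℝ) - C).det = 0 ∧ t ≤ s) := by
    intro s
    rw [hF, Finset.mem_filter, Multiset.mem_toFinset,
      Polynomial.mem_roots C.charpoly_monic.ne_zero]
    constructor
    · rintro ⟨h1, h2⟩; exact ⟨by rw [← eval_charpoly]; exact h1, h2⟩
    · rintro ⟨h1, h2⟩; exact ⟨by rw [Polynomial.IsRoot, eval_charpoly]; exact h1, h2⟩
  have hFne : F.Nonempty := ⟨z₀, (hmemF z₀).2 ⟨hz₀, hz₀t⟩⟩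
  set sstar := F.max' hFne with hsstar
  have hsmem := F.max'_mem hFne
  rw [hmemF] at hsmem
  obtain ⟨hsdet, hst⟩ := hsmem
  have habove : ∀ z, sstar < z → (z • (1 : Matrix (Fin m) (Fin m) ℝ) - C).det ≠ 0 := by
    intro z hz hdz
    have hzF : z ∈ F := (hmemF z).2 ⟨hdz, le_trans hst (le_of_lt hz)⟩
    exact absurd (F.le_max' z hzF) (not_le.mpr hz)
  have hCpos : ∀ z, sstar < z → 0 < (z • (1 : Matrix (Fin m) (Fin m) ℝ) - C).det := fun z hz =>
    det_pos_of_no_root C (fun y hy => habove y (lt_of_lt_of_le hz hy)) z le_rfl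
  have hCinv : ∀ z, sstar < z →
      ∀ p q, 0 ≤ (z • (1 : Matrix (Fin m) (Fin m) ℝ) - C)⁻¹ p q := fun z hz =>
    ih C (fun p q => hB _ _) z (fun y hy => habove y (lt_of_lt_of_le hz hy)) z le_rfl
  have hgnn : ∀ z, sstar < z → 0 ≤ gval B i z := fun z hz =>
    gval_nonneg B i z hB (hCinv z hz)
  have hschur : ∀ z, sstar < z →
      (z • (1 : Matrix (Fin (m + 1)) (Fin (m + 1)) ℝ) - B).det
        = (z • (1 : Matrix (Fin m) (Fin m) ℝ) - C).det * (z - B i i - gval B i z) :=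
    fun z hz => schur_det B i z (isUnit_iff_ne_zero.2 (ne_of_gt (hCpos z hz)))
  set G : ℝ → ℝ := fun z => (z • (1 : Matrix (Fin m) (Fin m) ℝ) - C).det * (z - B i i)
      - (z • (1 : Matrix (Fin (m + 1)) (Fin (m + 1)) ℝ) - B).det with hG
  have hGnn : ∀ z, sstar < z → 0 ≤ G z := by
    intro z hz
    have h2 : G z = (z • (1 : Matrix (Fin m) (Fin m) ℝ) - C).det * gval B i z := by
      rw [hG]; simp only; rw [hschur z hz]; ring
    rw [h2]
    exact mul_nonneg (hCpos z hz).le (hgnn z hz)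
  have hGcont : Continuous G := by
    have h1 : Continuous fun z : ℝ => (z • (1 : Matrix (Fin m) (Fin m) ℝ) - C).det := by
      have he : (fun z : ℝ => (z • (1 : Matrix (Fin m) (Fin m) ℝ) - C).det)
          = fun z => (C.charpoly).eval z := by
        funext z; rw [eval_charpoly]
      rw [he]; exact C.charpoly.continuous
    have h2 : Continuous fun z : ℝ =>
        (z • (1 : Matrix (Fin (m + 1)) (Fin (m + 1)) ℝ) - B).det := by
      have he : (fun z : ℝ => (z • (1 : Matrix (Fin (m + 1)) (Fin (m + 1)) ℝ) - B).det)
          = fun z => (B.charpoly).eval z := by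
        funext z; rw [eval_charpoly]
      rw [he]; exact B.charpoly.continuous
    exact ((h1.mul (continuous_id.sub continuous_const)).sub h2)
  have hGs : 0 ≤ G sstar := by
    have htd : Filter.Tendsto G (nhdsWithin sstar (Set.Ioi sstar)) (nhds (G sstar)) :=
      (hGcont.tendsto sstar).mono_left nhdsWithin_le_nhds
    exact ge_of_tendsto htd (eventually_nhdsWithin_of_forall fun z hz => hGnn z hz)
  have hBpos := det_pos_of_no_root B hroot sstar hst
  rw [hG] at hGs
  simp only at hGs
  rw [hsdet] at hGs
  nlinarith


lemma unit_inv_nonneg (S : Matrix Unit Unit ℝ) (h : 0 < S.det) : ∀ a b, 0 ≤ S⁻¹ a b := by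
  intro a b
  rw [Matrix.inv_def, Matrix.adjugate_subsingleton]
  rw [Matrix.smul_apply]
  rcases Subsingleton.elim a b
  rw [Matrix.one_apply_eq]
  rw [Ring.inverse_eq_inv']
  simp only [smul_eq_mul, mul_one]
  positivity

lemma invStat_all : ∀ m, InvStat m := by
  intro m
  induction m with
  | zero => intro B hB t hroot u hu p q; exact p.elim0
  | succ m ih =>
    intro B hB t hroot u hu p q
    set i : Fin (m + 1) := 0 with hi
    set C := minorM B i with hC
    have hminor := minor_step ih B hB t hroot i
    have hCroot : ∀ z, t ≤ z → (z • (1 : Matrix (Fin m) (Fin m) ℝ) - C).det ≠ 0 :=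
      fun z hz => ne_of_gt (hminor z hz)
    have hCinvAll := ih C (fun p q => hB _ _) t hCroot
    have hCinv : ∀ a b, 0 ≤ (u • (1 : Matrix (Fin m) (Fin m) ℝ) - C)⁻¹ a b := hCinvAll u hu
    have hCpos := hminor u hu
    have hBpos := det_pos_of_no_root B hroot u hu
    set A11 := u • (1 : Matrix (Fin m) (Fin m) ℝ) - C with hA11
    set Bb : Matrix (Fin m) Unit ℝ := Matrix.of fun p _ => -(B (i.succAbove p) i) with hBb
    set Cc : Matrix Unit (Fin m) ℝ := Matrix.of fun _ q => -(B i (i.succAbove q)) with hCc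
    set Dd : Matrix Unit Unit ℝ := Matrix.of fun _ _ => u - B i i with hDd
    haveI iA11 : Invertible A11 := A11.invertibleOfIsUnitDet (isUnit_iff_ne_zero.2 (ne_of_gt hCpos))
    have hsplit := split_eq B i u
    have hdet : (u • (1 : Matrix (Fin (m + 1)) (Fin (m + 1)) ℝ) - B).det
        = A11.det * (Dd - Cc * ⅟A11 * Bb).det := by
      rw [← Matrix.det_submatrix_equiv_self (splitEq i), hsplit, Matrix.det_fromBlocks₁₁]
    have hSpos : 0 < (Dd - Cc * ⅟A11 * Bb).det := by
      rw [hdet] at hBpos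
      by_contra hnot
      push_neg at hnot
      nlinarith
    haveI iS : Invertible (Dd - Cc * ⅟A11 * Bb) :=
      Matrix.invertibleOfIsUnitDet _ (isUnit_iff_ne_zero.2 (ne_of_gt hSpos))
    haveI iFB : Invertible (fromBlocks A11 Bb Cc Dd) := Matrix.fromBlocks₁₁Invertible A11 Bb Cc Dd
    have hform := Matrix.invOf_fromBlocks₁₁_eq A11 Bb Cc Dd
    have key : ∀ a b, 0 ≤ (⅟(fromBlocks A11 Bb Cc Dd)) a b := by
      have hIA : ⅟A11 = A11⁻¹ := Matrix.invOf_eq_nonsing_inv A11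
      have hIS : ⅟(Dd - Cc * ⅟A11 * Bb) = (Dd - Cc * ⅟A11 * Bb)⁻¹ :=
        Matrix.invOf_eq_nonsing_inv _
      have hISnn : ∀ a b, 0 ≤ (⅟(Dd - Cc * ⅟A11 * Bb)) a b := by
        rw [hIS]; exact unit_inv_nonneg _ hSpos
      have hAnn : ∀ a b, 0 ≤ (⅟A11) a b := by rw [hIA]; exact hCinv
      have hBb' : ∀ a b, 0 ≤ (-Bb) a b := by
        intro a b; simp only [hBb, Matrix.neg_apply, Matrix.of_apply, neg_neg]; exact hB _ _
      have hCc' : ∀ a b, 0 ≤ (-Cc) a b := by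
        intro a b; simp only [hCc, Matrix.neg_apply, Matrix.of_apply, neg_neg]; exact hB _ _
      intro a b
      rw [hform]
      rcases a with a | a <;> rcases b with b | b
      · rw [fromBlocks_apply₁₁]
        have h1 : ⅟A11 * Bb * ⅟(Dd - Cc * ⅟A11 * Bb) * Cc * ⅟A11
            = ⅟A11 * (-Bb) * ⅟(Dd - Cc * ⅟A11 * Bb) * (-Cc) * ⅟A11 := by
          simp only [Matrix.mul_neg, Matrix.neg_mul, neg_neg]
        rw [Matrix.add_apply, h1]
        refine add_nonneg (hAnn a b) ?_
        exact mul_nonneg_entries _ _ (mul_nonneg_entries _ _ (mul_nonneg_entries _ _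
          (mul_nonneg_entries _ _ hAnn hBb') hISnn) hCc') hAnn a b
      · rw [fromBlocks_apply₁₂]
        have h1 : -(⅟A11 * Bb * ⅟(Dd - Cc * ⅟A11 * Bb))
            = ⅟A11 * (-Bb) * ⅟(Dd - Cc * ⅟A11 * Bb) := by
          simp only [Matrix.mul_neg, Matrix.neg_mul, neg_neg]
        rw [h1]
        exact mul_nonneg_entries _ _ (mul_nonneg_entries _ _ hAnn hBb') hISnn a b
      · rw [fromBlocks_apply₂₁]
        have h1 : -(⅟(Dd - Cc * ⅟A11 * Bb) * Cc * ⅟A11)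
            = ⅟(Dd - Cc * ⅟A11 * Bb) * (-Cc) * ⅟A11 := by
          simp only [Matrix.mul_neg, Matrix.neg_mul, neg_neg]
        rw [h1]
        exact mul_nonneg_entries _ _ (mul_nonneg_entries _ _ hISnn hCc') hAnn a b
      · rw [fromBlocks_apply₂₂]
        exact hISnn a b
    have hsub : ((u • (1 : Matrix (Fin (m + 1)) (Fin (m + 1)) ℝ) - B).submatrix
          (splitEq i) (splitEq i))⁻¹
        = (u • (1 : Matrix (Fin (m + 1)) (Fin (m + 1)) ℝ) - B)⁻¹.submatrix
          (splitEq i) (splitEq i) := Matrix.inv_submatrix_equiv _ _ _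
    have hval : (u • (1 : Matrix (Fin (m + 1)) (Fin (m + 1)) ℝ) - B)⁻¹ p q
        = (fromBlocks A11 Bb Cc Dd)⁻¹ ((splitEq i).symm p) ((splitEq i).symm q) := by
      rw [← hsplit, hsub]
      simp [Matrix.submatrix_apply]
    rw [hval, ← Matrix.invOf_eq_nonsing_inv]
    exact key _ _


lemma resolvent_sub (C : Matrix (Fin m) (Fin m) ℝ) (u₁ u₂ : ℝ)
    (h₁ : IsUnit (u₁ • (1 : Matrix (Fin m) (Fin m) ℝ) - C).det)
    (h₂ : IsUnit (u₂ • (1 : Matrix (Fin m) (Fin m) ℝ) - C).det) :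
    (u₁ • (1 : Matrix (Fin m) (Fin m) ℝ) - C)⁻¹ - (u₂ • (1 : Matrix (Fin m) (Fin m) ℝ) - C)⁻¹
      = (u₂ - u₁) • ((u₁ • (1 : Matrix (Fin m) (Fin m) ℝ) - C)⁻¹
          * (u₂ • (1 : Matrix (Fin m) (Fin m) ℝ) - C)⁻¹) := by
  set X := u₁ • (1 : Matrix (Fin m) (Fin m) ℝ) - C with hX
  set Y := u₂ • (1 : Matrix (Fin m) (Fin m) ℝ) - C with hY
  have hXY : Y - X = (u₂ - u₁) • (1 : Matrix (Fin m) (Fin m) ℝ) := by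
    rw [hX, hY, sub_sub_sub_cancel_right, ← sub_smul]
  have e1 : X⁻¹ * (Y - X) * Y⁻¹ = X⁻¹ - Y⁻¹ := by
    rw [Matrix.mul_sub, Matrix.sub_mul, Matrix.mul_assoc, Matrix.mul_nonsing_inv _ h₂,
      Matrix.mul_one, Matrix.nonsing_inv_mul _ h₁, Matrix.one_mul]
  rw [← e1, hXY]
  rw [Matrix.mul_smul, Matrix.smul_mul, Matrix.mul_one]

lemma eval_nonneg_of_right (f : Polynomial ℝ) (r : ℝ) (h : ∀ u, r < u → 0 ≤ f.eval u) :
    0 ≤ f.eval r := by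
  have htd : Filter.Tendsto (fun u => f.eval u) (nhdsWithin r (Set.Ioi r)) (nhds (f.eval r)) :=
    ((f.continuous).tendsto r).mono_left nhdsWithin_le_nhds
  exact ge_of_tendsto htd (eventually_nhdsWithin_of_forall fun u hu => h u hu)

lemma rootMult_pow (p : Polynomial ℝ) (hp : p ≠ 0) (r : ℝ) (k : ℕ) :
    (p ^ k).rootMultiplicity r = k * p.rootMultiplicity r := by
  induction k with
  | zero =>
    rw [pow_zero, Polynomial.rootMultiplicity_eq_zero (by simp [Polynomial.IsRoot])]
    simp
  | succ k ihk =>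
    rw [pow_succ, Polynomial.rootMultiplicity_mul (mul_ne_zero (pow_ne_zero _ hp) hp), ihk]
    ring

lemma exists_nonneg_eigenvector {m : ℕ} (hm : 0 < m) (M : Matrix (Fin m) (Fin m) ℝ)
    (hM : ∀ p q, 0 ≤ M p q) (r : ℝ)
    (hr : (r • (1 : Matrix (Fin m) (Fin m) ℝ) - M).det = 0)
    (hmax : ∀ u, r < u → (u • (1 : Matrix (Fin m) (Fin m) ℝ) - M).det ≠ 0) :
    ∃ w : Fin m → ℝ, w ≠ 0 ∧ (∀ p, 0 ≤ w p) ∧ M.mulVec w = r • w := by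
  classical
  haveI : Nonempty (Fin m) := ⟨⟨0, hm⟩⟩
  set P : Polynomial ℝ := M.charpoly with hPdef
  have hP0 : P ≠ 0 := M.charpoly_monic.ne_zero
  have hPr : P.IsRoot r := by rw [Polynomial.IsRoot, hPdef, eval_charpoly]; exact hr
  set a := P.rootMultiplicity r with hadef
  have ha : 1 ≤ a := (Polynomial.rootMultiplicity_pos hP0).2 hPr
  set N : Matrix (Fin m) (Fin m) (Polynomial ℝ) := (charmatrix M).adjugate with hNdef
  have hNeval : ∀ u : ℝ, N.map (evalRingHom u)
      = (u • (1 : Matrix (Fin m) (Fin m) ℝ) - M).adjugate := by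
    intro u
    have h := RingHom.map_adjugate (evalRingHom u) (charmatrix M)
    rw [RingHom.mapMatrix_apply, RingHom.mapMatrix_apply, charmatrix_map_eval] at h
    exact h
  have hNnn : ∀ u, r < u → ∀ p q, 0 ≤ (N p q).eval u := by
    intro u hu p q
    have hdetpos : 0 < (u • (1 : Matrix (Fin m) (Fin m) ℝ) - M).det :=
      det_pos_of_no_root M (fun z hz => hmax z (lt_of_lt_of_le hu hz)) u le_rfl
    have hinv : 0 ≤ (u • (1 : Matrix (Fin m) (Fin m) ℝ) - M)⁻¹ p q :=
      invStat_all m M hM u (fun z hz => hmax z (lt_of_lt_of_le hu hz)) u le_rfl p q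
    have hadj : (u • (1 : Matrix (Fin m) (Fin m) ℝ) - M).adjugate p q
        = (u • (1 : Matrix (Fin m) (Fin m) ℝ) - M).det
          * ((u • (1 : Matrix (Fin m) (Fin m) ℝ) - M)⁻¹ p q) := by
      rw [Matrix.inv_def, Matrix.smul_apply, Ring.inverse_eq_inv', smul_eq_mul]
      field_simp
    have heval : (N p q).eval u = (u • (1 : Matrix (Fin m) (Fin m) ℝ) - M).adjugate p q := by
      have := congrFun (congrFun (hNeval u) p) q
      simpa [Matrix.map_apply] using this
    rw [heval, hadj]
    exact mul_nonneg hdetpos.le hinv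
  have hNne : N ≠ 0 := by
    intro h0
    have hdetN : N.det = P ^ (m - 1) := by
      rw [hNdef, Matrix.det_adjugate]
      congr 1
      · simp [Fintype.card_fin]
    rw [h0, Matrix.det_zero] at hdetN
    exact pow_ne_zero _ hP0 hdetN.symm
  set s : Finset (Fin m × Fin m) := Finset.univ.filter (fun pq => N pq.1 pq.2 ≠ 0) with hs
  have hentry : ∃ p q, N p q ≠ 0 := by
    by_contra hempty
    push_neg at hempty
    exact hNne (Matrix.ext fun p q => by simpa using hempty p q)
  obtain ⟨p₁, q₁, hpq1⟩ := hentry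
  have hsne : s.Nonempty :=
    ⟨(p₁, q₁), Finset.mem_filter.2 ⟨Finset.mem_univ _, hpq1⟩⟩
  set e := s.inf' hsne (fun pq => (N pq.1 pq.2).rootMultiplicity r) with he
  obtain ⟨pq₀, hpq₀s, hpq₀e⟩ := s.exists_mem_eq_inf' hsne (fun pq => (N pq.1 pq.2).rootMultiplicity r)
  have hNpq₀ : N pq₀.1 pq₀.2 ≠ 0 := by
    rw [hs, Finset.mem_filter] at hpq₀s; exact hpq₀s.2
  have hdvdN : ∀ p q, (Polynomial.X - Polynomial.C r) ^ e ∣ N p q := by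
    intro p q
    by_cases h0 : N p q = 0
    · rw [h0]; exact dvd_zero _
    have hmem : (p, q) ∈ s := Finset.mem_filter.2 ⟨Finset.mem_univ _, h0⟩
    have hle : e ≤ (N p q).rootMultiplicity r := Finset.inf'_le _ hmem
    exact dvd_trans (pow_dvd_pow _ hle) (Polynomial.pow_rootMultiplicity_dvd _ r)
  have hea : e < a := by
    by_contra hh
    push_neg at hh
    have hdvd_det : (Polynomial.X - Polynomial.C r) ^ (a * m) ∣ N.det := by
      rw [Matrix.det_apply]
      apply Finset.dvd_sum
      intro σ _
      have hprod : (Polynomial.X - Polynomial.C r) ^ (a * m) ∣ ∏ k, N (σ k) k := by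
        have h1 : ∏ (_ : Fin m), (Polynomial.X - Polynomial.C r) ^ a ∣ ∏ k, N (σ k) k := by
          apply Finset.prod_dvd_prod_of_dvd
          intro k _
          exact dvd_trans (pow_dvd_pow _ hh) (hdvdN (σ k) k)
        rwa [Finset.prod_const, ← pow_mul, Finset.card_univ, Fintype.card_fin, mul_comm a m,
          mul_comm m a] at h1
      rcases Int.units_eq_one_or (Equiv.Perm.sign σ) with hsgn | hsgn <;>
        rw [hsgn] <;> simp only [one_smul, Units.neg_smul] <;>
        [exact hprod; exact dvd_neg.2 hprod]
    have hdetN : N.det = P ^ (m - 1) := by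
      rw [hNdef, Matrix.det_adjugate]
      congr 1
      · simp [Fintype.card_fin]
    rw [hdetN] at hdvd_det
    have hle : a * m ≤ (P ^ (m - 1)).rootMultiplicity r :=
      (Polynomial.le_rootMultiplicity_iff (pow_ne_zero _ hP0)).2 hdvd_det
    rw [rootMult_pow P hP0 r (m - 1), ← hadef] at hle
    have h1 : a * m ≤ (m - 1) * a := hle
    have h2 : (m - 1) * a < m * a := by
      have h0a : 0 < a := ha
      exact Nat.mul_lt_mul_of_lt_of_le (by omega) le_rfl h0a
    have h3 : a * m = m * a := Nat.mul_comm a m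
    omega
  have hPdvd : (Polynomial.X - Polynomial.C r) ^ e ∣ P :=
    dvd_trans (pow_dvd_pow _ hea.le) (Polynomial.pow_rootMultiplicity_dvd P r)
  obtain ⟨Q, hQ⟩ := hPdvd
  have hXr : (Polynomial.X - Polynomial.C r : Polynomial ℝ) ≠ 0 := Polynomial.X_sub_C_ne_zero r
  have hQr : Q.eval r = 0 := by
    have h1 : (Polynomial.X - Polynomial.C r) ^ (e + 1) ∣ P :=
      dvd_trans (pow_dvd_pow _ (by omega)) (Polynomial.pow_rootMultiplicity_dvd P r)
    rw [hQ] at h1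
    rw [pow_succ] at h1
    have h2 : (Polynomial.X - Polynomial.C r) ∣ Q := by
      have := (mul_dvd_mul_iff_left (pow_ne_zero e hXr)).1 h1
      exact this
    exact Polynomial.dvd_iff_isRoot.1 h2
  choose Nt hNt using fun p q => hdvdN p q
  have hmulN : charmatrix M * N = P • (1 : Matrix (Fin m) (Fin m) (Polynomial ℝ)) := by
    rw [hNdef, Matrix.mul_adjugate]
    rfl
  have hmulNt : charmatrix M * Matrix.of Nt = Q • (1 : Matrix (Fin m) (Fin m) (Polynomial ℝ)) := by
    have hkey : (Polynomial.X - Polynomial.C r) ^ e • (charmatrix M * Matrix.of Nt)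
        = (Polynomial.X - Polynomial.C r) ^ e • (Q • (1 : Matrix (Fin m) (Fin m) (Polynomial ℝ))) := by
      rw [← Matrix.mul_smul]
      have hNt' : (Polynomial.X - Polynomial.C r) ^ e • (Matrix.of Nt : Matrix (Fin m) (Fin m) (Polynomial ℝ)) = N := by
        apply Matrix.ext; intro p q
        rw [Matrix.smul_apply, Matrix.of_apply, smul_eq_mul]
        exact (hNt p q).symm
      rw [hNt', smul_smul, ← hQ]
      exact hmulN
    apply Matrix.ext; intro p q
    have h := congrFun (congrFun (congrArg (fun Z => Z) hkey) p) q
    simp only [Matrix.smul_apply, smul_eq_mul] at h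
    exact mul_left_cancel₀ (pow_ne_zero e hXr) h
  set D : Matrix (Fin m) (Fin m) ℝ := (Matrix.of Nt).map (evalRingHom r) with hD
  have hDeq : (r • (1 : Matrix (Fin m) (Fin m) ℝ) - M) * D = 0 := by
    have h := congrArg (fun Z : Matrix (Fin m) (Fin m) (Polynomial ℝ) => Z.map (evalRingHom r)) hmulNt
    rw [Matrix.map_mul, charmatrix_map_eval] at h
    rw [← hD] at h
    rw [h]
    ext p q
    by_cases h' : p = q <;>
      simp [Matrix.map_apply, Matrix.smul_apply, Matrix.one_apply, h', hQr, smul_eq_mul]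
  have hDnn : ∀ p q, 0 ≤ D p q := by
    intro p q
    have hnn : ∀ u, r < u → 0 ≤ (Nt p q).eval u := by
      intro u hu
      have h1 : 0 ≤ (N p q).eval u := hNnn u hu p q
      rw [hNt p q, Polynomial.eval_mul, Polynomial.eval_pow, Polynomial.eval_sub,
        Polynomial.eval_X, Polynomial.eval_C] at h1
      have h2 : 0 < (u - r) ^ e := pow_pos (by linarith) e
      exact le_of_not_gt fun hlt => absurd h1 (not_le.2 (mul_neg_of_pos_of_neg h2 hlt))
    exact eval_nonneg_of_right _ r hnn
  have hDentry : D pq₀.1 pq₀.2 ≠ 0 := by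
    intro h0
    have hRoot : (Polynomial.X - Polynomial.C r) ∣ Nt pq₀.1 pq₀.2 := by
      apply Polynomial.dvd_iff_isRoot.2
      rw [Polynomial.IsRoot]
      have : D pq₀.1 pq₀.2 = (Nt pq₀.1 pq₀.2).eval r := by
        rw [hD, Matrix.map_apply, Matrix.of_apply]; rfl
      rw [← this]; exact h0
    obtain ⟨T, hT⟩ := hRoot
    have hdvd1 : (Polynomial.X - Polynomial.C r) ^ (e + 1) ∣ N pq₀.1 pq₀.2 :=
      ⟨T, by rw [hNt pq₀.1 pq₀.2, hT, pow_succ]; ring⟩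
    have h2 : e + 1 ≤ (N pq₀.1 pq₀.2).rootMultiplicity r :=
      (Polynomial.le_rootMultiplicity_iff hNpq₀).2 hdvd1
    omega
  refine ⟨fun p => D p pq₀.2, ?_, fun p => hDnn p _, ?_⟩
  · intro h0
    exact hDentry (by simpa using congrFun h0 pq₀.1)
  · have hcol : (r • (1 : Matrix (Fin m) (Fin m) ℝ) - M).mulVec (fun p => D p pq₀.2) = 0 := by
      funext p
      have h := congrFun (congrFun hDeq p) pq₀.2
      simpa [Matrix.mul_apply, Matrix.mulVec, dotProduct] using h
    rw [Matrix.sub_mulVec, Matrix.smul_mulVec, Matrix.one_mulVec, sub_eq_zero] at hcol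
    exact hcol.symm


lemma pow_entries_nonneg {k : ℕ} (A : Matrix (Fin k) (Fin k) ℝ) (hA : ∀ p q, 0 ≤ A p q) :
    ∀ j p q, 0 ≤ (A ^ j) p q := by
  intro j
  induction j with
  | zero =>
    intro p q
    by_cases h : p = q <;> simp [pow_zero, Matrix.one_apply, h]
  | succ j ihj =>
    intro p q
    rw [pow_succ]
    exact mul_nonneg_entries _ _ ihj hA p q

lemma mulVec_pow_eig {k : ℕ} (A : Matrix (Fin k) (Fin k) ℝ) (v : Fin k → ℝ) (c : ℝ)
    (h : A.mulVec v = c • v) : ∀ j, (A ^ j).mulVec v = c ^ j • v := by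
  intro j
  induction j with
  | zero => simp
  | succ j ihj =>
    rw [pow_succ, ← Matrix.mulVec_mulVec, h, Matrix.mulVec_smul, ihj, smul_smul, pow_succ]
    ring_nf

lemma single_le_mulVec {k : ℕ} (M : Matrix (Fin k) (Fin k) ℝ) (hM : ∀ p q, 0 ≤ M p q)
    (v : Fin k → ℝ) (hv : ∀ q, 0 ≤ v q) (p q : Fin k) : M p q * v q ≤ (M.mulVec v) p := by
  have : (M.mulVec v) p = ∑ j, M p j * v j := rfl
  rw [this]
  exact Finset.single_le_sum (fun j _ => mul_nonneg (hM p j) (hv j)) (Finset.mem_univ q)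

end HPaux

/-- A square nonnegative matrix is irreducible if every entry of some power is positive. -/
def MatIrred {n : ℕ} (M : Matrix (Fin n) (Fin n) ℝ) : Prop :=
  ∀ i j, ∃ k : ℕ, 0 < (M ^ k) i j

/-- Hall–Porsching separation theorem: any real eigenvalue `λ_p ≠ λ₁(A)` of a
nonnegative matrix `A` satisfies `λ_p ≤ λ₁(A_i) ≤ λ₁(A)` for every principal
`(n-1)×(n-1)` minor `A_i`, with `λ₁(A_i) < λ₁(A)` when `A` is irreducible. -/
theorem stmt_15 (n : ℕ) (A : Matrix (Fin (n + 1)) (Fin (n + 1)) ℝ)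
    (hA : ∀ i j, 0 ≤ A i j)
    (lam1 : ℝ)
    (hlam1 : IsGreatest {μ : ℝ | ∃ v : Fin (n + 1) → ℝ, v ≠ 0 ∧ A.mulVec v = μ • v} lam1)
    (lamp : ℝ)
    (hp : ∃ v : Fin (n + 1) → ℝ, v ≠ 0 ∧ A.mulVec v = lamp • v)
    (hne : lamp ≠ lam1)
    (i : Fin (n + 1)) (mu : ℝ)
    (hmu : IsGreatest
      {μ : ℝ | ∃ v : Fin n → ℝ, v ≠ 0 ∧
        (A.submatrix i.succAbove i.succAbove).mulVec v = μ • v} mu) :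
    lamp ≤ mu ∧ mu ≤ lam1 ∧ (MatIrred A → mu < lam1) := by
  classical
  obtain ⟨w0, hw0ne, hw0eq⟩ := hmu.1
  have hnpos : 0 < n := by
    by_contra hc
    push_neg at hc
    interval_cases n
    exact hw0ne (funext fun j => j.elim0)
  set C := A.submatrix i.succAbove i.succAbove with hCdef
  have hCnn : ∀ p q, 0 ≤ C p q := fun p q => hA _ _
  have hlampLe : lamp ≤ lam1 := hlam1.2 hp
  have hlampLt : lamp < lam1 := lt_of_le_of_ne hlampLe hne
  have hAroot : ∀ u, lam1 < u →
      (u • (1 : Matrix (Fin (n + 1)) (Fin (n + 1)) ℝ) - A).det ≠ 0 := by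
    intro u hu hdet
    exact absurd (hlam1.2 ((HPaux.eig_iff_det A u).2 hdet)) (not_le.2 hu)
  have hCroot : ∀ u, mu < u → (u • (1 : Matrix (Fin n) (Fin n) ℝ) - C).det ≠ 0 := by
    intro u hu hdet
    exact absurd (hmu.2 ((HPaux.eig_iff_det C u).2 hdet)) (not_le.2 hu)
  have hCdet0 : (mu • (1 : Matrix (Fin n) (Fin n) ℝ) - C).det = 0 :=
    (HPaux.eig_iff_det C mu).1 ⟨w0, hw0ne, hw0eq⟩
  have hAdet1 : (lam1 • (1 : Matrix (Fin (n + 1)) (Fin (n + 1)) ℝ) - A).det = 0 :=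
    (HPaux.eig_iff_det A lam1).1 hlam1.1
  have hAdetp : (lamp • (1 : Matrix (Fin (n + 1)) (Fin (n + 1)) ℝ) - A).det = 0 :=
    (HPaux.eig_iff_det A lamp).1 hp
  have part2 : mu ≤ lam1 := by
    by_contra hcon
    push_neg at hcon
    have hmid : lam1 < (lam1 + mu) / 2 := by linarith
    have hstep := HPaux.minor_step (HPaux.invStat_all n) A hA ((lam1 + mu) / 2)
      (fun u hu => hAroot u (lt_of_lt_of_le hmid hu)) i mu (by linarith)
    exact absurd hCdet0 (ne_of_gt hstep)
  have part1 : lamp ≤ mu := by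
    by_contra hcon
    push_neg at hcon
    have hmuLam1 : mu < lam1 := lt_trans hcon hlampLt
    have hCpos : ∀ u, mu < u → 0 < (u • (1 : Matrix (Fin n) (Fin n) ℝ) - C).det := fun u hu =>
      HPaux.det_pos_of_no_root C (fun z hz => hCroot z (lt_of_lt_of_le hu hz)) u le_rfl
    have hCinv : ∀ u, mu < u → ∀ p q, 0 ≤ (u • (1 : Matrix (Fin n) (Fin n) ℝ) - C)⁻¹ p q :=
      fun u hu =>
        HPaux.invStat_all n C hCnn u (fun z hz => hCroot z (lt_of_lt_of_le hu hz)) u le_rfl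
    have hschur : ∀ u, mu < u → (u • (1 : Matrix (Fin (n + 1)) (Fin (n + 1)) ℝ) - A).det
        = (u • (1 : Matrix (Fin n) (Fin n) ℝ) - C).det * (u - A i i - HPaux.gval A i u) :=
      fun u hu => HPaux.schur_det A i u (isUnit_iff_ne_zero.2 (ne_of_gt (hCpos u hu)))
    have hs_p : lamp - A i i - HPaux.gval A i lamp = 0 := by
      have h := hschur lamp hcon
      rw [hAdetp] at h
      exact (mul_eq_zero.1 h.symm).resolve_left (ne_of_gt (hCpos lamp hcon))
    have hs_1 : lam1 - A i i - HPaux.gval A i lam1 = 0 := by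
      have h := hschur lam1 hmuLam1
      rw [hAdet1] at h
      exact (mul_eq_zero.1 h.symm).resolve_left (ne_of_gt (hCpos lam1 hmuLam1))
    have hgm : HPaux.gval A i lam1 ≤ HPaux.gval A i lamp := by
      have hres := HPaux.resolvent_sub C lamp lam1
        (isUnit_iff_ne_zero.2 (ne_of_gt (hCpos lamp hcon)))
        (isUnit_iff_ne_zero.2 (ne_of_gt (hCpos lam1 hmuLam1)))
      have hdiff : HPaux.gval A i lamp - HPaux.gval A i lam1
          = ∑ p, ∑ q, A i (i.succAbove p) *
              (((lamp • (1 : Matrix (Fin n) (Fin n) ℝ) - C)⁻¹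
                - (lam1 • (1 : Matrix (Fin n) (Fin n) ℝ) - C)⁻¹) p q) * A (i.succAbove q) i := by
        rw [HPaux.gval, HPaux.gval, ← Finset.sum_sub_distrib]
        apply Finset.sum_congr rfl; intro p _
        rw [← Finset.sum_sub_distrib]
        apply Finset.sum_congr rfl; intro q _
        rw [Matrix.sub_apply]
        ring
      rw [hres] at hdiff
      have hnn : 0 ≤ HPaux.gval A i lamp - HPaux.gval A i lam1 := by
        rw [hdiff]
        apply Finset.sum_nonneg; intro p _
        apply Finset.sum_nonneg; intro q _
        rw [Matrix.smul_apply, smul_eq_mul]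
        have hprod := HPaux.mul_nonneg_entries _ _ (hCinv lamp hcon) (hCinv lam1 hmuLam1) p q
        exact mul_nonneg (mul_nonneg (hA _ _)
          (mul_nonneg (by linarith : (0:ℝ) ≤ lam1 - lamp) hprod)) (hA _ _)
      linarith
    linarith
  have part3 : MatIrred A → mu < lam1 := by
    intro hirr
    rcases lt_or_eq_of_le part2 with hlt | heq
    · exact hlt
    exfalso
    obtain ⟨w, hwne, hwnn, hweig⟩ :=
      HPaux.exists_nonneg_eigenvector hnpos C hCnn mu hCdet0 hCroot
    have htr : ∀ u : ℝ, u • (1 : Matrix (Fin (n + 1)) (Fin (n + 1)) ℝ) - Aᵀ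
        = (u • (1 : Matrix (Fin (n + 1)) (Fin (n + 1)) ℝ) - A)ᵀ := by
      intro u
      rw [Matrix.transpose_sub, Matrix.transpose_smul, Matrix.transpose_one]
    have hTdet : (lam1 • (1 : Matrix (Fin (n + 1)) (Fin (n + 1)) ℝ) - Aᵀ).det = 0 := by
      rw [htr lam1, Matrix.det_transpose]
      exact hAdet1
    have hTroot : ∀ u, lam1 < u →
        (u • (1 : Matrix (Fin (n + 1)) (Fin (n + 1)) ℝ) - Aᵀ).det ≠ 0 := by
      intro u hu
      rw [htr u, Matrix.det_transpose]
      exact hAroot u hu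
    obtain ⟨uv, huvne, huvnn, huveig⟩ :=
      HPaux.exists_nonneg_eigenvector (Nat.succ_pos n) Aᵀ (fun p q => hA q p) lam1 hTdet hTroot
    obtain ⟨q₀, hq₀⟩ : ∃ q₀, uv q₀ ≠ 0 := by
      by_contra hc; push_neg at hc; exact huvne (funext fun p => hc p)
    have hq₀pos : 0 < uv q₀ := lt_of_le_of_ne (huvnn q₀) (Ne.symm hq₀)
    have hpowT : ∀ j, (Aᵀ ^ j).mulVec uv = lam1 ^ j • uv :=
      HPaux.mulVec_pow_eig Aᵀ uv lam1 huveig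
    have huvpos : ∀ p, 0 < uv p := by
      intro p
      obtain ⟨k, hk⟩ := hirr q₀ p
      have h1 : (Aᵀ ^ k) p q₀ * uv q₀ ≤ ((Aᵀ ^ k).mulVec uv) p :=
        HPaux.single_le_mulVec _ (HPaux.pow_entries_nonneg Aᵀ (fun p q => hA q p) k) uv huvnn p q₀
      rw [hpowT k] at h1
      have h2 : (Aᵀ ^ k) p q₀ = (A ^ k) q₀ p := by
        rw [← Matrix.transpose_pow, Matrix.transpose_apply]
      rw [Pi.smul_apply, smul_eq_mul] at h1
      have h3 : 0 < lam1 ^ k * uv p := by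
        calc (0:ℝ) < (Aᵀ ^ k) p q₀ * uv q₀ := by rw [h2]; exact mul_pos hk hq₀pos
        _ ≤ lam1 ^ k * uv p := h1
      by_contra hle
      push_neg at hle
      have h4 : uv p = 0 := le_antisymm hle (huvnn p)
      rw [h4, mul_zero] at h3
      exact lt_irrefl 0 h3
    set wt : Fin (n + 1) → ℝ := i.insertNth 0 w with hwt
    have hwt_i : wt i = 0 := by rw [hwt]; simp
    have hwt_sA : ∀ j, wt (i.succAbove j) = w j := by intro j; rw [hwt]; simp
    have hwtnn : ∀ p, 0 ≤ wt p := by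
      intro p
      by_cases hpi : p = i
      · rw [hpi, hwt_i]
      · obtain ⟨j, hj⟩ := Fin.exists_succAbove_eq hpi
        rw [← hj, hwt_sA]; exact hwnn j
    have hAwt_sA : ∀ j, (A.mulVec wt) (i.succAbove j) = mu * w j := by
      intro j
      have hsum : (A.mulVec wt) (i.succAbove j) = ∑ q, A (i.succAbove j) q * wt q := rfl
      rw [hsum, Fin.sum_univ_succAbove (fun q => A (i.succAbove j) q * wt q) i]
      rw [hwt_i, mul_zero, zero_add]
      have hCsum : ∑ q, A (i.succAbove j) (i.succAbove q) * wt (i.succAbove q)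
          = (C.mulVec w) j := by
        apply Finset.sum_congr rfl; intro q _; rw [hwt_sA]; rfl
      rw [hCsum, hweig, Pi.smul_apply, smul_eq_mul]
    have hcwnn : 0 ≤ (A.mulVec wt) i := by
      have hsum : (A.mulVec wt) i = ∑ q, A i q * wt q := rfl
      rw [hsum]
      exact Finset.sum_nonneg fun q _ => mul_nonneg (hA _ _) (hwtnn q)
    have hdot1 : uv ⬝ᵥ A.mulVec wt = lam1 * (uv ⬝ᵥ wt) := by
      rw [Matrix.dotProduct_mulVec, ← Matrix.mulVec_transpose, huveig, smul_dotProduct,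
        smul_eq_mul]
    have hterms : ∀ p, 0 ≤ uv p * ((A.mulVec wt) p - mu * wt p) := by
      intro p
      by_cases hpi : p = i
      · rw [hpi, hwt_i, mul_zero, sub_zero]
        exact mul_nonneg (huvpos i).le hcwnn
      · obtain ⟨j, hj⟩ := Fin.exists_succAbove_eq hpi
        rw [← hj, hAwt_sA j, hwt_sA j, sub_self, mul_zero]
    have hsum0 : ∑ p, uv p * ((A.mulVec wt) p - mu * wt p) = 0 := by
      have hexp : ∑ p, uv p * ((A.mulVec wt) p - mu * wt p)
          = uv ⬝ᵥ A.mulVec wt - mu * (uv ⬝ᵥ wt) := by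
        rw [dotProduct, dotProduct, Finset.mul_sum, ← Finset.sum_sub_distrib]
        apply Finset.sum_congr rfl; intro p _
        ring
      rw [hexp, hdot1, heq]
      ring
    have hallzero := (Finset.sum_eq_zero_iff_of_nonneg (fun p _ => hterms p)).1 hsum0
    have hcwzero : (A.mulVec wt) i = 0 := by
      have h := hallzero i (Finset.mem_univ i)
      rw [hwt_i, mul_zero, sub_zero] at h
      rcases mul_eq_zero.1 h with h' | h'
      · exact absurd h' (ne_of_gt (huvpos i))
      · exact h'
    have hAwt : A.mulVec wt = mu • wt := by
      funext p
      by_cases hpi : p = i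
      · rw [hpi, Pi.smul_apply, hwt_i, smul_eq_mul, mul_zero]
        exact hcwzero
      · obtain ⟨j, hj⟩ := Fin.exists_succAbove_eq hpi
        rw [← hj, hAwt_sA j, Pi.smul_apply, hwt_sA j, smul_eq_mul]
    obtain ⟨j₀, hj₀⟩ : ∃ j₀, w j₀ ≠ 0 := by
      by_contra hc; push_neg at hc; exact hwne (funext fun j => hc j)
    have hwtq : 0 < wt (i.succAbove j₀) := by
      rw [hwt_sA]; exact lt_of_le_of_ne (hwnn j₀) (Ne.symm hj₀)
    obtain ⟨k, hk⟩ := hirr i (i.succAbove j₀)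
    have hpow := HPaux.mulVec_pow_eig A wt mu hAwt k
    have h1 : (A ^ k) i (i.succAbove j₀) * wt (i.succAbove j₀) ≤ ((A ^ k).mulVec wt) i :=
      HPaux.single_le_mulVec _ (HPaux.pow_entries_nonneg A hA k) wt hwtnn i _
    rw [hpow, Pi.smul_apply, hwt_i, smul_eq_mul, mul_zero] at h1
    exact absurd h1 (not_le.2 (mul_pos hk hwtq))
  exact ⟨part1, part2, part3⟩
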